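/- arXiv:1811.02366 — 4 statements merged into one kernel-verified Lean document; each statement's English description precedes it below -/
import Mathlib

section
/- Let < be an irreflexive, transitive, well-founded, and modular relation on a finite nonempty set Δ, and for x ∈ Δ let k(x) be the length of the longest chain x_0 < x_1 < ... < x descending from x to a minimal element x_0. Then for all x, y ∈ Δ: x < y if and only if k(x) < k(y). -/
/-- There is a chain x_0 < x_1 < ... < x_m = x of length m from a minimal element x_0 to x. -/
def ChainTo {Δ : Type*} (lt : Δ → Δ → Prop) (m : ℕ) (x : Δ) : Prop :=
  ∃ c : ℕ → Δ, (∀ i < m, lt (c i) (c (i + 1))) ∧ c m = x ∧ (∀ z, ¬ lt z (c 0))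

/-- For an irreflexive, transitive, well-founded and modular relation on a finite
nonempty set, with k(x) the length of the longest chain descending from x to a
minimal element, we have x < y iff k(x) < k(y). -/
theorem stmt_5 {Δ : Type*} [Fintype Δ] [Nonempty Δ] (lt : Δ → Δ → Prop)
    (hirr : ∀ x, ¬ lt x x)
    (htrans : ∀ x y z, lt x y → lt y z → lt x z)
    (hwf : ∀ S : Set Δ, S.Nonempty → ∃ x ∈ S, ∀ y ∈ S, ¬ lt y x)
    (hmod : ∀ x y z, lt x y → lt x z ∨ lt z y)
    (k : Δ → ℕ)
    (hk : ∀ x, ChainTo lt (k x) x ∧ ∀ m, ChainTo lt m x → m ≤ k x) :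
    ∀ x y, lt x y ↔ k x < k y := by
  have hA : ∀ x y, lt x y → k x + 1 ≤ k y := by
    intro x y hxy
    obtain ⟨⟨c, hc1, hc2, hc3⟩, -⟩ := hk x
    refine (hk y).2 (k x + 1) ⟨fun i => if i ≤ k x then c i else y, ?_, ?_, ?_⟩
    · intro i hi
      rcases lt_or_eq_of_le (Nat.lt_succ_iff.mp hi) with h | h
      · simp only [if_pos (le_of_lt h), if_pos (Nat.succ_le_of_lt h)]
        exact hc1 i h
      · subst h
        simp only [if_pos le_rfl, if_neg (by omega : ¬ (k x + 1 ≤ k x)), hc2]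
        exact hxy
    · simp only [if_neg (by omega : ¬ (k x + 1 ≤ k x))]
    · intro z
      simpa using hc3 z
  intro x y
  constructor
  · exact hA x y
  · intro hxy
    obtain ⟨⟨c, hc1, hc2, hc3⟩, -⟩ := hk y
    have hge : ∀ i ≤ k y, i ≤ k (c i) := by
      intro i hi
      exact (hk (c i)).2 i ⟨c, fun j hj => hc1 j (lt_of_lt_of_le hj hi), rfl, hc3⟩
    have hstep : ∀ d i, i + d ≤ k y → k (c i) + d ≤ k (c (i + d)) := by
      intro d
      induction d with
      | zero => intro i _; simp
      | succ d ih =>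
        intro i hi
        have h1 := ih i (by omega)
        have h2 := hA (c (i + d)) (c (i + d + 1)) (hc1 (i + d) (by omega))
        have : i + (d + 1) = i + d + 1 := by omega
        rw [this]
        omega
    have hki : ∀ i ≤ k y, k (c i) = i := by
      intro i hi
      have h1 := hstep (k y - i) i (by omega)
      rw [show i + (k y - i) = k y by omega, hc2] at h1
      have h2 := hge i hi
      omega
    have hiky : k x < k y := hxy
    have hlt : lt x (c (k x + 1)) := by
      rcases hmod (c (k x)) (c (k x + 1)) x (hc1 (k x) hiky) with h | h
      · have h1 := hA (c (k x)) x h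
        rw [hki (k x) (le_of_lt hiky)] at h1
        omega
      · exact h
    have hall : ∀ j, k x + 1 ≤ j → j ≤ k y → lt x (c j) := by
      intro j
      induction j with
      | zero => omega
      | succ j ih =>
        intro h1 h2
        rcases Nat.lt_or_ge (k x + 1) (j + 1) with h | h
        · exact htrans _ _ _ (ih (by omega) (by omega)) (hc1 j (by omega))
        · have hj : j + 1 = k x + 1 := by omega
          rw [hj]; exact hlt
    have hfin := hall (k y) hiky le_rfl
    rwa [hc2] at hfin
end

section
/- Let < be an irreflexive, transitive, well-founded, and modular relation on Δ and f(S) = Min_<(S). Then for all subsets S, R ⊆ Δ: if f(S) ⊆ R then f(S) = f(S ∩ R). -/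
def typMin {Δ : Type*} (lt : Δ → Δ → Prop) (S : Set Δ) : Set Δ :=
  {x | x ∈ S ∧ ¬ ∃ y ∈ S, lt y x}

/-- (f_T-3): if f(S) ⊆ R then f(S) = f(S ∩ R). -/
theorem stmt_7 {Δ : Type*} (lt : Δ → Δ → Prop)
    (hirr : ∀ x, ¬ lt x x)
    (htrans : ∀ x y z, lt x y → lt y z → lt x z)
    (hwf : ∀ S : Set Δ, S.Nonempty → ∃ x ∈ S, ∀ y ∈ S, ¬ lt y x)
    (hmod : ∀ x y z, lt x y → lt x z ∨ lt z y) :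
    ∀ S R : Set Δ, typMin lt S ⊆ R → typMin lt S = typMin lt (S ∩ R) := by
  intro S R hsub
  ext x
  constructor
  · rintro ⟨hxS, hmin⟩
    refine ⟨⟨hxS, hsub ⟨hxS, hmin⟩⟩, ?_⟩
    rintro ⟨y, ⟨hyS, _⟩, hlt⟩
    exact hmin ⟨y, hyS, hlt⟩
  · rintro ⟨⟨hxS, hxR⟩, hmin⟩
    refine ⟨hxS, ?_⟩
    rintro ⟨y, hyS, hlt⟩
    obtain ⟨z, ⟨hzS, hzx⟩, hzmin⟩ := hwf {y | y ∈ S ∧ lt y x} ⟨y, hyS, hlt⟩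
    have hzMin : z ∈ typMin lt S := by
      refine ⟨hzS, ?_⟩
      rintro ⟨w, hwS, hwz⟩
      exact hzmin w ⟨hwS, htrans w z x hwz hzx⟩ hwz
    exact hmin ⟨z, ⟨hzS, hsub hzMin⟩, hzx⟩
end

section
/- Let < be an irreflexive, transitive, well-founded, and modular relation on Δ and f(S) = Min_<(S). Then for all subsets S, R ⊆ Δ: if f(S) ∩ R ≠ ∅, then f(S ∩ R) ⊆ f(S). -/
/-- (f_T-6), rational monotonicity: if f(S) ∩ R ≠ ∅ then f(S ∩ R) ⊆ f(S). -/
theorem stmt_10 {Δ : Type*} (lt : Δ → Δ → Prop)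
    (hirr : ∀ x, ¬ lt x x)
    (htrans : ∀ x y z, lt x y → lt y z → lt x z)
    (hwf : ∀ S : Set Δ, S.Nonempty → ∃ x ∈ S, ∀ y ∈ S, ¬ lt y x)
    (hmod : ∀ x y z, lt x y → lt x z ∨ lt z y) :
    ∀ S R : Set Δ, (typMin lt S ∩ R).Nonempty → typMin lt (S ∩ R) ⊆ typMin lt S := by
  rintro S R ⟨w, ⟨⟨hwS, hwmin⟩, hwR⟩⟩ x ⟨⟨hxS, hxR⟩, hxmin⟩
  refine ⟨hxS, ?_⟩
  rintro ⟨y, hyS, hyx⟩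
  rcases hmod y x w hyx with h | h
  · exact hwmin ⟨y, hyS, h⟩
  · exact hxmin ⟨w, ⟨hwS, hwR⟩, h⟩
end

section
/- Let f(S) = Min_<(S) for an irreflexive, transitive, well-founded, modular relation < on Δ. Then for all S, R: f(S ∪ R) ⊆ f(S) ∪ f(R), and if f(S ∪ R) ∩ S ≠ ∅ then f(S) ⊆ f(S ∪ R). -/
/-- f(S ∪ R) ⊆ f(S) ∪ f(R), and if f(S ∪ R) ∩ S ≠ ∅ then f(S) ⊆ f(S ∪ R). -/
theorem stmt_18 {Δ : Type*} (lt : Δ → Δ → Prop)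
    (hirr : ∀ x, ¬ lt x x)
    (htrans : ∀ x y z, lt x y → lt y z → lt x z)
    (hwf : ∀ S : Set Δ, S.Nonempty → ∃ x ∈ S, ∀ y ∈ S, ¬ lt y x)
    (hmod : ∀ x y z, lt x y → lt x z ∨ lt z y) :
    ∀ S R : Set Δ, typMin lt (S ∪ R) ⊆ typMin lt S ∪ typMin lt R ∧
      ((typMin lt (S ∪ R) ∩ S).Nonempty → typMin lt S ⊆ typMin lt (S ∪ R)) := by
  intro S R
  constructor
  · rintro x ⟨hx, hmin⟩
    rcases hx with hS | hR
    · left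
      exact ⟨hS, fun ⟨y, hy, hlt⟩ => hmin ⟨y, Or.inl hy, hlt⟩⟩
    · right
      exact ⟨hR, fun ⟨y, hy, hlt⟩ => hmin ⟨y, Or.inr hy, hlt⟩⟩
  · rintro ⟨z, ⟨hzU, hzmin⟩, hzS⟩ x ⟨hxS, hxmin⟩
    refine ⟨Or.inl hxS, ?_⟩
    rintro ⟨y, hy, hlt⟩
    rcases hy with hyS | hyR
    · exact hxmin ⟨y, hyS, hlt⟩
    · rcases hmod y x z hlt with h | h
      · exact hzmin ⟨y, Or.inr hyR, h⟩
      · exact hxmin ⟨z, hzS, h⟩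
end
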